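/- Let F be a finite field with gcd(n,q)=1, H a cyclic group of odd order n, and e a primitive idempotent of FH with ē = e, where the bar map sends each group element to its inverse. If e ≠ e₀ := (1/n)∑_{x∈H}x, then the bar map restricts to an automorphism of order 2 of the field K = FHe, so the F-dimension of FHe is even and the fixed subfield F̃ = {a ∈ K : ā = a} satisfies [K : F̃] = 2. -/

import Mathlib

/-- The bar map on a group algebra, sending `∑ a_x x` to `∑ a_x x⁻¹`. -/
noncomputable def MonoidAlgebra.bar {F G : Type*} [Semiring F] [Group G]
    (a : MonoidAlgebra F G) : MonoidAlgebra F G :=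
  MonoidAlgebra.ofCoeff (Finsupp.equivMapDomain (Equiv.inv G) a.coeff)

section Aux

variable {F : Type*} [Field F] {H : Type*} [CommGroup H]

/-- The bar map as an `F`-algebra automorphism of the group algebra. -/
noncomputable def barAlg (F : Type*) [Field F] (H : Type*) [CommGroup H] :
    MonoidAlgebra F H ≃ₐ[F] MonoidAlgebra F H :=
  MonoidAlgebra.domCongr F F (MulEquiv.inv H)

lemma barAlg_apply (a : MonoidAlgebra F H) : barAlg F H a = MonoidAlgebra.bar a := by
  ext h
  simp [barAlg, MonoidAlgebra.bar, Finsupp.equivMapDomain, MulEquiv.inv, MonoidAlgebra.coeff_ofCoeff]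
  rfl

lemma bar_bar (a : MonoidAlgebra F H) : MonoidAlgebra.bar (MonoidAlgebra.bar a) = a := by
  ext h; simp [MonoidAlgebra.bar, Finsupp.equivMapDomain, MonoidAlgebra.coeff_ofCoeff]

lemma bar_mul (a b : MonoidAlgebra F H) :
    MonoidAlgebra.bar (a * b) = MonoidAlgebra.bar a * MonoidAlgebra.bar b := by
  rw [← barAlg_apply, ← barAlg_apply, ← barAlg_apply, map_mul]

lemma bar_single (x : H) (c : F) :
    MonoidAlgebra.bar (MonoidAlgebra.single x c) = MonoidAlgebra.single x⁻¹ c := by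
  ext h; simp [MonoidAlgebra.bar, Finsupp.equivMapDomain_single, MonoidAlgebra.coeff_ofCoeff, MonoidAlgebra.coeff_single]

end Aux

set_option maxHeartbeats 1000000 in
set_option synthInstance.maxHeartbeats 400000 in
/-- Let `F` be a finite field, `H` a cyclic group of odd order `n` with `gcd(n,q) = 1`,
and `e ≠ e₀` a primitive idempotent of `FH` fixed by the bar map. Then the bar map
restricts to an automorphism of order `2` of the field `K = FHe`; consequently the
`F`-dimension of `FHe` is even, and the fixed subfield `F̃ = {a ∈ K : ā = a}` satisfies
`[K : F̃] = 2` (equivalently `|K| = |F̃|²`). -/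
theorem bar_on_selfdual_primitive_idempotent_component
    (F : Type*) [Field F] [Fintype F] (H : Type*) [CommGroup H] [Fintype H] [IsCyclic H]
    (hodd : Odd (Fintype.card H)) (hcoprime : ((Fintype.card H : F) ≠ 0))
    (e : MonoidAlgebra F H) (hidem : IsIdempotentElem e) (hne : e ≠ 0)
    (hprim : IsAtom (Ideal.span {e} : Ideal (MonoidAlgebra F H)))
    (hbar : MonoidAlgebra.bar e = e)
    (hne0 : e ≠ (Fintype.card H : F)⁻¹ • ∑ x : H, MonoidAlgebra.of F H x) :
    (∀ a ∈ Ideal.span {e}, MonoidAlgebra.bar a ∈ Ideal.span {e}) ∧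
    (∃ a ∈ Ideal.span {e}, MonoidAlgebra.bar a ≠ a) ∧
    Even (Module.finrank F
      (Submodule.restrictScalars F (Ideal.span {e} : Ideal (MonoidAlgebra F H)))) ∧
    Nat.card {a : MonoidAlgebra F H // a ∈ Ideal.span {e}} =
      (Nat.card {a : MonoidAlgebra F H //
          a ∈ Ideal.span {e} ∧ MonoidAlgebra.bar a = a}) ^ 2 := by
  classical
  haveI : Finite (MonoidAlgebra F H) :=
    Finite.of_equiv (H → F) (Finsupp.equivFunOnFinite.symm.trans MonoidAlgebra.coeffEquiv.symm : (H → F) ≃ MonoidAlgebra F H)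
  set I : Ideal (MonoidAlgebra F H) := Ideal.span {e} with hIdef
  -- Part 1 : bar maps the ideal to itself
  have part1 : ∀ a ∈ I, MonoidAlgebra.bar a ∈ I := by
    intro a ha
    rw [hIdef, Ideal.mem_span_singleton'] at ha ⊢
    obtain ⟨c, rfl⟩ := ha
    exact ⟨MonoidAlgebra.bar c, by rw [bar_mul, hbar]⟩
  -- Part 2 : bar is not the identity on the ideal
  have part2 : ∃ a ∈ I, MonoidAlgebra.bar a ≠ a := by
    by_contra hcon
    push_neg at hcon
    -- every group element acts trivially on e
    have hfix : ∀ x : H, MonoidAlgebra.single x (1 : F) * e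
        = MonoidAlgebra.single x⁻¹ (1 : F) * e := by
      intro x
      have hmem : MonoidAlgebra.single x (1 : F) * e ∈ I :=
        Ideal.mul_mem_left _ _ (Ideal.subset_span rfl)
      have := hcon _ hmem
      rw [bar_mul, hbar, bar_single] at this
      exact this.symm
    have hsq : ∀ x : H, ∃ z : H, z * z = x := by
      intro x
      obtain ⟨k, hk⟩ := hodd
      refine ⟨x ^ (k + 1), ?_⟩
      rw [← pow_add]
      have h2 : k + 1 + (k + 1) = Fintype.card H + 1 := by omega
      rw [h2, pow_succ, pow_card_eq_one, one_mul]
    have hx : ∀ x : H, MonoidAlgebra.single x (1 : F) * e = e := by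
      intro x
      obtain ⟨z, rfl⟩ := hsq x
      calc MonoidAlgebra.single (z * z) (1 : F) * e
          = MonoidAlgebra.single z (1 : F) * (MonoidAlgebra.single z (1 : F) * e) := by
            rw [← mul_assoc, MonoidAlgebra.single_mul_single, one_mul]
        _ = MonoidAlgebra.single z (1 : F) * (MonoidAlgebra.single z⁻¹ (1 : F) * e) := by
            rw [hfix z]
        _ = (MonoidAlgebra.single z (1 : F) * MonoidAlgebra.single z⁻¹ (1 : F)) * e := by
            rw [mul_assoc]
        _ = e := by
            rw [MonoidAlgebra.single_mul_single, one_mul, mul_inv_cancel,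
              ← MonoidAlgebra.one_def, one_mul]
    -- hence e has constant coefficients
    have hconst : ∀ y : H, e.coeff y = e.coeff 1 := by
      intro y
      have h' : ∀ h' : H, (MonoidAlgebra.single y (1 : F) * e).coeff h' = e.coeff h' :=
        fun h' => by rw [hx y]
      have := h' y
      rw [MonoidAlgebra.single_mul_apply, inv_mul_cancel, one_mul] at this
      exact this.symm
    set s : MonoidAlgebra F H := ∑ x : H, MonoidAlgebra.of F H x with hs
    have hs_apply : ∀ h : H, s.coeff h = 1 := by
      intro h
      rw [hs, MonoidAlgebra.coeff_sum, Finsupp.finset_sum_apply]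
      simp [MonoidAlgebra.of_apply, Finsupp.single_apply, MonoidAlgebra.coeff_single]
    have he_eq : e = e.coeff 1 • s := by
      ext h
      rw [MonoidAlgebra.coeff_smul_apply, hs_apply, smul_eq_mul, mul_one, hconst]
    have hss : s * s = (Fintype.card H : F) • s := by
      have h1 : s * s = ∑ x : H, MonoidAlgebra.single x (1 : F) * s := by
        rw [← Finset.sum_mul]
        congr 1
      have h2 : ∀ x : H, MonoidAlgebra.single x (1 : F) * s = s := by
        intro x
        ext h
        rw [MonoidAlgebra.single_mul_apply, hs_apply, hs_apply, one_mul]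
      rw [h1]
      simp only [h2]
      rw [Finset.sum_const, Finset.card_univ]
      rw [Nat.cast_smul_eq_nsmul]
    have hid := hidem
    rw [IsIdempotentElem, he_eq, smul_mul_smul_comm, hss, smul_smul] at hid
    have hcoeff : (e.coeff 1 * e.coeff 1 * (Fintype.card H : F)) • s.coeff 1 = e.coeff 1 • s.coeff 1 := by
      have h' : ∀ h' : H, ((e.coeff 1 * e.coeff 1 * (Fintype.card H : F)) • s).coeff h' = (e.coeff 1 • s).coeff h' :=
        fun h' => by rw [hid]
      have := h' 1
      rwa [MonoidAlgebra.coeff_smul_apply, MonoidAlgebra.coeff_smul_apply] at this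
    rw [hs_apply, smul_eq_mul, smul_eq_mul, mul_one, mul_one] at hcoeff
    have he1ne : e.coeff 1 ≠ 0 := by
      intro h0
      apply hne
      rw [he_eq, h0, zero_smul]
    have hmul1 : e.coeff 1 * (Fintype.card H : F) = 1 := by
      apply mul_left_cancel₀ he1ne
      rw [← mul_assoc, hcoeff, mul_one]
    have hkey : e.coeff 1 = (Fintype.card H : F)⁻¹ := eq_inv_of_mul_eq_one_left hmul1
    exact hne0 (by rw [he_eq, hkey])
  refine ⟨part1, part2, ?_⟩
  -- the complementary maximal ideal
  set M : Ideal (MonoidAlgebra F H) := Ideal.span {1 - e} with hMdef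
  have hinj0 : ∀ a ∈ I, a ∈ M → a = 0 := by
    intro a haI haM
    rw [hIdef, Ideal.mem_span_singleton'] at haI
    rw [hMdef, Ideal.mem_span_singleton'] at haM
    obtain ⟨c, rfl⟩ := haI
    obtain ⟨d, hd⟩ := haM
    have h1 : c * e * e = c * e := by rw [mul_assoc, hidem]
    calc c * e = c * e * e := h1.symm
      _ = d * (1 - e) * e := by rw [hd]
      _ = d * (e - e * e) := by ring
      _ = 0 := by rw [hidem]; ring
  have hMmax : M.IsMaximal := by
    rw [Ideal.isMaximal_iff]
    constructor
    · intro h1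
      rw [hMdef, Ideal.mem_span_singleton'] at h1
      obtain ⟨d, hd⟩ := h1
      apply hne
      calc e = d * (1 - e) * e := by rw [hd, one_mul]
        _ = d * (e - e * e) := by ring
        _ = 0 := by rw [hidem]; ring
    · intro J x hMJ hxM hxJ
      have hex : e * x ≠ 0 := by
        intro h0
        apply hxM
        rw [hMdef, Ideal.mem_span_singleton']
        refine ⟨x, ?_⟩
        calc x * (1 - e) = x - e * x := by ring
          _ = x := by rw [h0, sub_zero]
      have h1 : Ideal.span {e * x} ≤ I := by
        rw [Ideal.span_le, Set.singleton_subset_iff]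
        exact Ideal.mul_mem_right _ _ (Ideal.subset_span rfl)
      have h2 : Ideal.span ({e * x} : Set (MonoidAlgebra F H)) ≠ ⊥ := by
        rw [Ne, Ideal.span_singleton_eq_bot]
        exact hex
      have h3 : Ideal.span ({e * x} : Set (MonoidAlgebra F H)) = I := by
        rcases (hprim.le_iff).mp h1 with h | h
        · exact absurd h h2
        · exact h
      have heJ : e ∈ J := by
        have : e ∈ Ideal.span ({e * x} : Set (MonoidAlgebra F H)) := h3 ▸ Ideal.subset_span rfl
        rw [Ideal.mem_span_singleton'] at this
        obtain ⟨c, hc⟩ := this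
        rw [← hc]
        exact Ideal.mul_mem_left _ _ (Ideal.mul_mem_left _ _ hxJ)
      have h1e : (1 : MonoidAlgebra F H) - e ∈ J := hMJ (Ideal.subset_span rfl)
      have : (1 : MonoidAlgebra F H) ∈ J := by
        have := J.add_mem heJ h1e
        rwa [add_sub_cancel] at this
      exact this
  haveI := hMmax
  letI : Field (MonoidAlgebra F H ⧸ M) := Ideal.Quotient.field M
  haveI : Finite (MonoidAlgebra F H ⧸ M) := Quotient.finite _
  haveI : Module.Finite F (MonoidAlgebra F H ⧸ M) := Module.Finite.of_finite
  -- the induced automorphism σ of K = MonoidAlgebra F H ⧸ M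
  have hbarM : ∀ a : MonoidAlgebra F H, a ∈ M → Ideal.Quotient.mk M (MonoidAlgebra.bar a) = 0 := by
    intro a ha
    rw [hMdef, Ideal.mem_span_singleton'] at ha
    obtain ⟨d, rfl⟩ := ha
    rw [Ideal.Quotient.eq_zero_iff_mem, bar_mul]
    have hb1 : MonoidAlgebra.bar ((1 : MonoidAlgebra F H) - e) = 1 - e := by
      rw [← barAlg_apply, map_sub, map_one, barAlg_apply, hbar]
    rw [hb1, hMdef, Ideal.mem_span_singleton']
    exact ⟨MonoidAlgebra.bar d, rfl⟩
  let σ0 : MonoidAlgebra F H →ₐ[F] (MonoidAlgebra F H ⧸ M) := (Ideal.Quotient.mkₐ F M).comp (barAlg F H).toAlgHom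
  have hσ0 : ∀ a : MonoidAlgebra F H, a ∈ M → σ0 a = 0 := by
    intro a ha
    simpa [σ0, barAlg_apply] using hbarM a ha
  let σh : (MonoidAlgebra F H ⧸ M) →ₐ[F] (MonoidAlgebra F H ⧸ M) := Ideal.Quotient.liftₐ M σ0 hσ0
  have hσhmk : ∀ a : MonoidAlgebra F H, σh (Ideal.Quotient.mk M a) = Ideal.Quotient.mk M (MonoidAlgebra.bar a) := by
    intro a
    show σ0 a = _
    simp [σ0, barAlg_apply]
  have hσσ : σh.comp σh = AlgHom.id F (MonoidAlgebra F H ⧸ M) := by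
    apply AlgHom.ext
    intro x
    obtain ⟨a, rfl⟩ := Ideal.Quotient.mk_surjective x
    simp [hσhmk, bar_bar]
  let σ : (MonoidAlgebra F H ⧸ M) ≃ₐ[F] (MonoidAlgebra F H ⧸ M) := AlgEquiv.ofAlgHom σh σh hσσ hσσ
  have hσmk : ∀ a : MonoidAlgebra F H, σ (Ideal.Quotient.mk M a) = Ideal.Quotient.mk M (MonoidAlgebra.bar a) :=
    hσhmk
  -- injectivity of the quotient map on I, surjectivity
  have hinj : ∀ a ∈ I, ∀ b ∈ I, Ideal.Quotient.mk M a = Ideal.Quotient.mk M b → a = b := by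
    intro a ha b hb hab
    rw [Ideal.Quotient.mk_eq_mk_iff_sub_mem] at hab
    have := hinj0 (a - b) (I.sub_mem ha hb) hab
    linear_combination this
  have hsurj : ∀ x : MonoidAlgebra F H ⧸ M, ∃ a ∈ I, Ideal.Quotient.mk M a = x := by
    intro x
    obtain ⟨b, rfl⟩ := Ideal.Quotient.mk_surjective x
    refine ⟨e * b, Ideal.mul_mem_right _ _ (Ideal.subset_span rfl), ?_⟩
    rw [Ideal.Quotient.mk_eq_mk_iff_sub_mem]
    rw [hMdef, Ideal.mem_span_singleton']
    exact ⟨-b, by ring⟩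
  -- σ has order 2
  have hσ2 : σ * σ = 1 := by
    ext x
    obtain ⟨a, rfl⟩ := Ideal.Quotient.mk_surjective x
    simp only [AlgEquiv.mul_apply, AlgEquiv.one_apply, hσmk, bar_bar]
  have hσne : σ ≠ 1 := by
    intro h1
    obtain ⟨a, haI, hane⟩ := part2
    apply hane
    have : σ (Ideal.Quotient.mk M a) = Ideal.Quotient.mk M a := by rw [h1]; rfl
    rw [hσmk] at this
    exact hinj _ (part1 a haI) _ haI this
  have horder : orderOf σ = 2 := by
    apply orderOf_eq_prime
    · rw [pow_two]; exact hσ2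
    · exact hσne
  -- the fixed subfield
  set H₀ : Subgroup ((MonoidAlgebra F H ⧸ M) ≃ₐ[F] (MonoidAlgebra F H ⧸ M)) := Subgroup.zpowers σ with hH₀
  haveI : DecidablePred (· ∈ H₀) := Classical.decPred _
  set Ft := IntermediateField.fixedField H₀ with hFt
  have hfr : Module.finrank Ft (MonoidAlgebra F H ⧸ M) = 2 := by
    have h1 : Module.finrank (IntermediateField.fixedField H₀) (MonoidAlgebra F H ⧸ M)
        = Nat.card H₀ := IntermediateField.finrank_fixedField_eq_card H₀
    rw [hFt, h1, hH₀, Nat.card_zpowers, horder]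
  have hmemFt : ∀ x : MonoidAlgebra F H ⧸ M, x ∈ Ft ↔ σ x = x := by
    intro x
    constructor
    · intro hx
      exact hx ⟨σ, Subgroup.mem_zpowers σ⟩
    · intro hx
      intro g
      have hg : (g : (MonoidAlgebra F H ⧸ M) ≃ₐ[F] (MonoidAlgebra F H ⧸ M)) ∈ Subgroup.zpowers σ := g.2
      rw [Subgroup.zpowers_eq_closure] at hg
      have : (g : (MonoidAlgebra F H ⧸ M) ≃ₐ[F] (MonoidAlgebra F H ⧸ M)) x = x := by
        refine Subgroup.closure_induction ?_ ?_ ?_ ?_ hg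
        · intro τ hτ
          rw [Set.mem_singleton_iff] at hτ
          rw [hτ]; exact hx
        · rfl
        · intro τ₁ τ₂ _ _ h1 h2
          show τ₁ (τ₂ x) = x
          rw [h2, h1]
        · intro τ _ h1
          show τ⁻¹ x = x
          nth_rewrite 1 [← h1]
          exact AlgEquiv.symm_apply_apply τ x
      exact this
  -- the bijections
  have hEquiv1 : Nat.card {a : MonoidAlgebra F H // a ∈ I} = Nat.card (MonoidAlgebra F H ⧸ M) := by
    apply Nat.card_congr
    refine Equiv.ofBijective (fun a => Ideal.Quotient.mk M a.1) ⟨?_, ?_⟩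
    · intro a b hab
      exact Subtype.ext (hinj _ a.2 _ b.2 hab)
    · intro x
      obtain ⟨a, ha, hax⟩ := hsurj x
      exact ⟨⟨a, ha⟩, hax⟩
  have hEquiv2 : Nat.card {a : MonoidAlgebra F H // a ∈ I ∧ MonoidAlgebra.bar a = a} = Nat.card Ft := by
    apply Nat.card_congr
    refine Equiv.ofBijective (fun a => ⟨Ideal.Quotient.mk M a.1, ?_⟩) ⟨?_, ?_⟩
    · rw [hmemFt, hσmk, a.2.2]
    · intro a b hab
      have : Ideal.Quotient.mk M a.1 = Ideal.Quotient.mk M b.1 := congrArg Subtype.val hab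
      exact Subtype.ext (hinj _ a.2.1 _ b.2.1 this)
    · rintro ⟨x, hx⟩
      obtain ⟨a, ha, hax⟩ := hsurj x
      have hfixa : MonoidAlgebra.bar a = a := by
        rw [hmemFt] at hx
        rw [← hax, hσmk] at hx
        exact hinj _ (part1 a ha) _ ha hx
      exact ⟨⟨a, ha, hfixa⟩, Subtype.ext hax⟩
  -- cardinality count
  haveI : Fintype (MonoidAlgebra F H ⧸ M) := Fintype.ofFinite _
  haveI : Fintype Ft := Fintype.ofFinite _
  have hcards : Nat.card {a : MonoidAlgebra F H // a ∈ I} =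
      (Nat.card {a : MonoidAlgebra F H // a ∈ I ∧ MonoidAlgebra.bar a = a}) ^ 2 := by
    rw [hEquiv1, hEquiv2, Nat.card_eq_fintype_card, Nat.card_eq_fintype_card,
      Module.card_eq_pow_finrank (K := Ft) (V := MonoidAlgebra F H ⧸ M), hfr]
  -- evenness of the dimension
  have hlin : Nonempty ((Submodule.restrictScalars F I) ≃ₗ[F] (MonoidAlgebra F H ⧸ M)) := by
    refine ⟨LinearEquiv.ofBijective
      ((Ideal.Quotient.mkₐ F M).toLinearMap.comp (Submodule.subtype _)) ⟨?_, ?_⟩⟩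
    · intro a b hab
      exact Subtype.ext (hinj _ a.2 _ b.2 hab)
    · intro x
      obtain ⟨a, ha, hax⟩ := hsurj x
      exact ⟨⟨a, ha⟩, hax⟩
  have heven : Even (Module.finrank F (Submodule.restrictScalars F I)) := by
    obtain ⟨φ⟩ := hlin
    rw [LinearEquiv.finrank_eq φ]
    rw [← Module.finrank_mul_finrank F Ft (MonoidAlgebra F H ⧸ M), hfr]
    exact ⟨Module.finrank F Ft, by ring⟩
  exact ⟨heven, hcards⟩
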